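/- Suppose γ₁, γ₂ ∈ H^{α,β} with α, β > d/2, and the collision kernel satisfies ‖b‖_∞ < ∞. Then the loss term satisfies the instantaneous bilinear estimate ‖B⁻(γ₁,γ₂)‖_{H^{α,β}} ≤ C ‖b‖_∞ ‖γ₁‖_{H^{α,β}} ‖γ₂‖_{H^{α,β}}, where C depends only on d, α, β. The key reduction is: if I := sup_{ξ,ξ′} ∫ dη dη′ ⟨ξ+ξ′⟩^{2α} / (⟨ξ+ξ′−η−η′⟩^{2α} ⟨η+η′⟩^{2α} ⟨η−η′⟩^{2β}) < ∞, then the claimed bilinear bound holds with C² proportional to I. -/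

import Mathlib

open MeasureTheory Real
open scoped ENNReal

noncomputable section

abbrev Ed (d : ℕ) : Type := EuclideanSpace ℝ (Fin d)

def jap {d : ℕ} (y : Ed d) : ℝ := Real.sqrt (1 + ‖y‖ ^ 2)

/-- The squared `H^{α,β}` weight `⟨ξ+ξ′⟩^{2α}⟨ξ−ξ′⟩^{2β}`. -/
def w2 {d : ℕ} (α β : ℝ) (q : Ed d × Ed d) : ℝ≥0∞ :=
  ENNReal.ofReal ((jap (q.1 + q.2)) ^ (2 * α) * (jap (q.1 - q.2)) ^ (2 * β))

namespace Stmt15Aux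

instance instHaarProd (d : ℕ) :
    Measure.IsAddHaarMeasure ((volume : Measure (Ed d)).prod (volume : Measure (Ed d))) :=
  Measure.prod.instIsAddHaarMeasure _ _

instance instRightInvProd (d : ℕ) :
    (volume : Measure (Ed d × Ed d)).IsAddRightInvariant := by
  rw [Measure.volume_eq_prod]; infer_instance

variable {d : ℕ}

lemma one_le_jap (y : Ed d) : 1 ≤ jap y := by
  rw [jap, Real.le_sqrt one_pos.le (by positivity)]; nlinarith [sq_nonneg ‖y‖]

lemma jap_pos (y : Ed d) : 0 < jap y := lt_of_lt_of_le one_pos (one_le_jap y)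

lemma measurable_jap : Measurable (jap (d := d)) := by
  unfold jap; fun_prop

lemma jap_add_le (x y : Ed d) : jap (x + y) ≤ jap x + jap y := by
  have h1 : jap x * jap y ≥ ‖x‖ * ‖y‖ := by
    rw [jap, jap, ← Real.sqrt_mul (by positivity)]
    calc ‖x‖ * ‖y‖ = Real.sqrt ((‖x‖*‖y‖)^2) := (Real.sqrt_sq (by positivity)).symm
    _ ≤ _ := Real.sqrt_le_sqrt (by nlinarith [sq_nonneg ‖x‖, sq_nonneg ‖y‖])
  have h2 : ‖x + y‖ ≤ ‖x‖ + ‖y‖ := norm_add_le x y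
  have hx : jap x ^ 2 = 1 + ‖x‖^2 := Real.sq_sqrt (by positivity)
  have hy : jap y ^ 2 = 1 + ‖y‖^2 := Real.sq_sqrt (by positivity)
  have hx0 : 0 ≤ jap x := Real.sqrt_nonneg _
  have hy0 : 0 ≤ jap y := Real.sqrt_nonneg _
  rw [jap]
  have h3 : 1 + ‖x + y‖^2 ≤ (jap x + jap y)^2 := by
    nlinarith [norm_nonneg x, norm_nonneg y, norm_nonneg (x+y)]
  calc Real.sqrt (1 + ‖x+y‖^2) ≤ Real.sqrt ((jap x + jap y)^2) := Real.sqrt_le_sqrt h3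
  _ = jap x + jap y := Real.sqrt_sq (by positivity)

lemma jap_mono {x y : Ed d} (h : ‖x‖ ≤ ‖y‖) : jap x ≤ jap y :=
  Real.sqrt_le_sqrt (by nlinarith [norm_nonneg x])

lemma one_add_le_sqrt_two_mul_jap (y : Ed d) : 1 + ‖y‖ ≤ Real.sqrt 2 * jap y := by
  rw [jap, ← Real.sqrt_mul (by positivity)]
  calc 1+‖y‖ = Real.sqrt ((1+‖y‖)^2) := (Real.sqrt_sq (by positivity)).symm
  _ ≤ _ := Real.sqrt_le_sqrt (by nlinarith [sq_nonneg (1-‖y‖)])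

/-- `⟨W⟩^r ≤ 2^r (⟨W-u⟩^r + ⟨u⟩^r)`. -/
lemma jap_rpow_le {r : ℝ} (hr : 0 ≤ r) (W u : Ed d) :
    jap W ^ r ≤ 2 ^ r * (jap (W - u) ^ r + jap u ^ r) := by
  have h0 : jap W ≤ jap (W - u) + jap u := by
    have := jap_add_le (W - u) u
    simpa using this
  have hmax : jap (W - u) + jap u ≤ 2 * max (jap (W - u)) (jap u) := by
    rcases le_total (jap (W-u)) (jap u) with h | h
    · rw [max_eq_right h]; linarith
    · rw [max_eq_left h]; linarith
  have h1 : jap W ^ r ≤ (2 * max (jap (W - u)) (jap u)) ^ r :=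
    Real.rpow_le_rpow (jap_pos W).le (h0.trans hmax) hr
  have h2 : (2 * max (jap (W - u)) (jap u)) ^ r
      = 2 ^ r * max (jap (W - u)) (jap u) ^ r :=
    Real.mul_rpow (by norm_num) (le_max_of_le_left (jap_pos _).le)
  have h3 : max (jap (W - u)) (jap u) ^ r ≤ jap (W - u) ^ r + jap u ^ r := by
    rcases le_total (jap (W-u)) (jap u) with h | h
    · rw [max_eq_right h]
      nlinarith [Real.rpow_nonneg (jap_pos (W-u)).le r]
    · rw [max_eq_left h]
      nlinarith [Real.rpow_nonneg (jap_pos u).le r]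
  calc jap W ^ r ≤ 2 ^ r * max (jap (W - u)) (jap u) ^ r := by rw [← h2]; exact h1
  _ ≤ _ := by nlinarith [Real.rpow_nonneg (show (0:ℝ) ≤ 2 by norm_num) r]

/-- ENNReal weight. -/
def JE (r : ℝ) (y : Ed d) : ℝ≥0∞ := ENNReal.ofReal (jap y ^ r)

lemma JE_ne_zero {r : ℝ} (y : Ed d) : JE r y ≠ 0 := by
  simp [JE, ENNReal.ofReal_eq_zero, not_le, Real.rpow_pos_of_pos (jap_pos y) r]

lemma JE_ne_top {r : ℝ} (y : Ed d) : JE r y ≠ ⊤ := ENNReal.ofReal_ne_top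

lemma JE_inv_le_one {r : ℝ} (hr : 0 ≤ r) (y : Ed d) : (JE r y)⁻¹ ≤ 1 := by
  rw [ENNReal.inv_le_one]
  simp only [JE]
  rw [show (1:ℝ≥0∞) = ENNReal.ofReal 1 by simp]
  exact ENNReal.ofReal_le_ofReal (Real.one_le_rpow (one_le_jap y) hr)

lemma measurable_JE (r : ℝ) : Measurable (JE (d := d) r) :=
  ENNReal.measurable_ofReal.comp ((measurable_jap.pow_const r))

/-- Finiteness of `∫ ⟨y⟩^{-r}` for `r > d`. -/
lemma JE_inv_integral_lt_top {r : ℝ} (hdr : (d : ℝ) < r) :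
    (∫⁻ y : Ed d, (JE r y)⁻¹) < ∞ := by
  have hr : 0 < r := lt_of_le_of_lt (Nat.cast_nonneg d) hdr
  have key : ∀ y : Ed d, (JE r y)⁻¹ ≤
      ENNReal.ofReal ((Real.sqrt 2) ^ r) * ENNReal.ofReal ((1 + ‖y‖) ^ (-r)) := by
    intro y
    have h1 : (1 + ‖y‖) / Real.sqrt 2 ≤ jap y := by
      rw [div_le_iff₀ (by positivity)]
      calc 1 + ‖y‖ ≤ Real.sqrt 2 * jap y := one_add_le_sqrt_two_mul_jap y
      _ = jap y * Real.sqrt 2 := mul_comm _ _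
    have h2 : ((1 + ‖y‖) / Real.sqrt 2) ^ r ≤ jap y ^ r :=
      Real.rpow_le_rpow (by positivity) h1 hr.le
    have h3 : (jap y ^ r)⁻¹ ≤ (((1 + ‖y‖) / Real.sqrt 2) ^ r)⁻¹ := by
      apply inv_anti₀ (by positivity) h2
    have h4 : (((1 + ‖y‖) / Real.sqrt 2) ^ r)⁻¹
        = (Real.sqrt 2) ^ r * (1 + ‖y‖) ^ (-r) := by
      rw [Real.div_rpow (by positivity) (by positivity), Real.rpow_neg (by positivity)]
      field_simp
    rw [JE, ← ENNReal.ofReal_inv_of_pos (Real.rpow_pos_of_pos (jap_pos y) r),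
      ← ENNReal.ofReal_mul (by positivity)]
    exact ENNReal.ofReal_le_ofReal (by rw [← h4]; exact h3)
  calc (∫⁻ y : Ed d, (JE r y)⁻¹)
      ≤ ∫⁻ y : Ed d, ENNReal.ofReal ((Real.sqrt 2) ^ r) * ENNReal.ofReal ((1 + ‖y‖) ^ (-r)) :=
        lintegral_mono key
  _ = ENNReal.ofReal ((Real.sqrt 2) ^ r) * ∫⁻ y : Ed d, ENNReal.ofReal ((1 + ‖y‖) ^ (-r)) :=
        lintegral_const_mul' _ _ ENNReal.ofReal_ne_top
  _ < ∞ := by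
        apply ENNReal.mul_lt_top ENNReal.ofReal_lt_top
        have : (Module.finrank ℝ (Ed d) : ℝ) < r := by
          rwa [finrank_euclideanSpace_fin]
        exact finite_integral_one_add_norm this

lemma JE_inv_eq (r : ℝ) (y : Ed d) : (JE r y)⁻¹ = ENNReal.ofReal ((jap y ^ r)⁻¹) := by
  rw [JE, ← ENNReal.ofReal_inv_of_pos (Real.rpow_pos_of_pos (jap_pos y) r)]

/-- pointwise bound on the key integrand -/
lemma integrand_le {a b : ℝ} (ha : 0 ≤ a) (hb : 0 ≤ b) (W u v : Ed d) :
    ENNReal.ofReal (jap W ^ a / (jap (W - u) ^ a * jap u ^ a * jap v ^ b))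
      ≤ ENNReal.ofReal (2 ^ a) * (((JE a u)⁻¹ + (JE a (W - u))⁻¹) * (JE b v)⁻¹) := by
  have hA : (0:ℝ) < jap (W - u) ^ a := Real.rpow_pos_of_pos (jap_pos _) a
  have hB : (0:ℝ) < jap u ^ a := Real.rpow_pos_of_pos (jap_pos _) a
  have hC : (0:ℝ) < jap v ^ b := Real.rpow_pos_of_pos (jap_pos _) b
  rw [JE_inv_eq, JE_inv_eq, JE_inv_eq, ← ENNReal.ofReal_add (by positivity) (by positivity),
    ← ENNReal.ofReal_mul (by positivity), ← ENNReal.ofReal_mul (by positivity)]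
  apply ENNReal.ofReal_le_ofReal
  rw [div_le_iff₀ (by positivity)]
  have hkey := jap_rpow_le ha W u
  have heq : 2 ^ a * (((jap u ^ a)⁻¹ + (jap (W - u) ^ a)⁻¹) * (jap v ^ b)⁻¹)
      * (jap (W - u) ^ a * jap u ^ a * jap v ^ b)
      = 2 ^ a * (jap (W - u) ^ a + jap u ^ a) := by
    field_simp
    try exact Or.inl trivial
  rw [heq]; exact hkey

/-- Part 1: uniform bound on the integral. -/
lemma part1 {α β : ℝ} (hα : (d : ℝ) / 2 < α) (hβ : (d : ℝ) / 2 < β) (ξ ξ' : Ed d) :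
    (∫⁻ η : Ed d, ∫⁻ η' : Ed d,
        ENNReal.ofReal ((jap (ξ + ξ')) ^ (2 * α) /
          ((jap (ξ + ξ' - η - η')) ^ (2 * α) * (jap (η + η')) ^ (2 * α) *
            (jap (η - η')) ^ (2 * β))))
      ≤ ENNReal.ofReal (2 ^ (2*α)) *
          ((2 * ∫⁻ y : Ed d, (JE (2*α) y)⁻¹) * ∫⁻ y : Ed d, (JE (2*β) y)⁻¹) := by
  have hd0 : (0:ℝ) ≤ d := Nat.cast_nonneg d
  have ha : 0 ≤ 2*α := by linarith
  have hb : 0 ≤ 2*β := by linarith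
  set W := ξ + ξ' with hW
  set Iα := ∫⁻ y : Ed d, (JE (d := d) (2*α) y)⁻¹ with hIα
  set Iβ := ∫⁻ y : Ed d, (JE (d := d) (2*β) y)⁻¹ with hIβ
  have hIβ_top : Iβ ≠ ⊤ := (JE_inv_integral_lt_top (by linarith)).ne
  set h : Ed d → ℝ≥0∞ := fun x => (JE (2*α) x)⁻¹ + (JE (2*α) (W - x))⁻¹ with hh
  set g : Ed d → ℝ≥0∞ := fun v => (JE (2*β) v)⁻¹ with hg
  have hmeas_h : Measurable h :=
    (measurable_JE _).inv.add (((measurable_JE _).comp (measurable_const.sub measurable_id)).inv)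
  have hmeas_g : Measurable g := (measurable_JE _).inv
  have h_top : ∀ x, h x ≠ ⊤ := fun x => by
    have := JE_inv_le_one ha x
    have := JE_inv_le_one ha (W - x)
    intro hcontra
    have : h x ≤ 2 := by
      calc h x ≤ 1 + 1 := add_le_add (JE_inv_le_one ha x) (JE_inv_le_one ha (W-x))
      _ = 2 := by norm_num
    rw [hcontra] at this
    exact (lt_irrefl _ (lt_of_le_of_lt this (by norm_num))).elim
  -- step 1: pointwise bound
  have step1 : (∫⁻ η : Ed d, ∫⁻ η' : Ed d,
        ENNReal.ofReal ((jap W) ^ (2 * α) /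
          ((jap (W - η - η')) ^ (2 * α) * (jap (η + η')) ^ (2 * α) *
            (jap (η - η')) ^ (2 * β))))
      ≤ ∫⁻ η : Ed d, ∫⁻ η' : Ed d,
          ENNReal.ofReal (2 ^ (2*α)) * (h (η + η') * g (η - η')) := by
    apply lintegral_mono; intro η
    apply lintegral_mono; intro η'
    dsimp only
    rw [sub_sub]
    calc ENNReal.ofReal ((jap W) ^ (2 * α) /
          ((jap (W - (η + η'))) ^ (2 * α) * (jap (η + η')) ^ (2 * α) *
            (jap (η - η')) ^ (2 * β)))
        ≤ ENNReal.ofReal (2 ^ (2*α)) *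
            (((JE (2*α) (η+η'))⁻¹ + (JE (2*α) (W - (η+η')))⁻¹) * (JE (2*β) (η-η'))⁻¹) :=
          integrand_le ha hb W (η+η') (η-η')
    _ = ENNReal.ofReal (2 ^ (2*α)) * (h (η + η') * g (η - η')) := rfl
  refine step1.trans ?_
  -- pull out constant
  have step2 : (∫⁻ η : Ed d, ∫⁻ η' : Ed d,
        ENNReal.ofReal (2 ^ (2*α)) * (h (η + η') * g (η - η')))
      = ENNReal.ofReal (2 ^ (2*α)) * ∫⁻ η : Ed d, ∫⁻ η' : Ed d, h (η + η') * g (η - η') := by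
    simp_rw [lintegral_const_mul' (ENNReal.ofReal (2 ^ (2*α))) _ ENNReal.ofReal_ne_top]
  rw [step2]
  apply mul_le_mul_right ?_ _
  -- step 3a: inner translation
  have step3a : ∀ η : Ed d, (∫⁻ η' : Ed d, h (η + η') * g (η - η'))
      = ∫⁻ x : Ed d, h x * g (η + η - x) := by
    intro η
    have := lintegral_add_right_eq_self (μ := volume) (fun x : Ed d => h x * g (η + η - x)) η
    rw [← this]
    apply lintegral_congr; intro η'
    rw [show η' + η = η + η' from add_comm _ _]
    congr 1
    exact congrArg g (by abel)
  simp_rw [step3a]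
  -- step 3b: swap
  have hmeas_u : Measurable (Function.uncurry fun (η x : Ed d) => h x * g (η + η - x)) := by
    apply Measurable.mul
    · exact hmeas_h.comp measurable_snd
    · exact hmeas_g.comp ((measurable_fst.add measurable_fst).sub measurable_snd)
  rw [lintegral_lintegral_swap hmeas_u.aemeasurable]
  -- step 3c,d,e: inner integral over η bounded by Iβ
  have step3d : ∀ x : Ed d, (∫⁻ η : Ed d, g (η + η - x)) ≤ Iβ := by
    intro x
    have htr := lintegral_add_right_eq_self (μ := volume)
      (fun η : Ed d => g (η + η - x)) ((2:ℝ)⁻¹ • x)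
    have e : ∀ η : Ed d, (η + (2:ℝ)⁻¹ • x) + (η + (2:ℝ)⁻¹ • x) - x = η + η := by
      intro η
      have : (2:ℝ)⁻¹ • x + (2:ℝ)⁻¹ • x = x := by
        rw [← add_smul]; norm_num
      rw [show (η + (2:ℝ)⁻¹ • x) + (η + (2:ℝ)⁻¹ • x) - x
          = η + η + ((2:ℝ)⁻¹ • x + (2:ℝ)⁻¹ • x) - x by abel, this]
      abel
    simp_rw [e] at htr
    rw [← htr]
    apply lintegral_mono; intro η
    have hj : jap η ≤ jap (η + η) := by
      apply jap_mono
      have : η + η = (2:ℝ) • η := (two_smul ℝ η).symm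
      rw [this, norm_smul]
      simp
      nlinarith [norm_nonneg η]
    have : JE (2*β) η ≤ JE (2*β) (η + η) :=
      ENNReal.ofReal_le_ofReal (Real.rpow_le_rpow (jap_pos η).le hj hb)
    exact ENNReal.inv_le_inv' this
  calc (∫⁻ x : Ed d, ∫⁻ η : Ed d, h x * g (η + η - x))
      = ∫⁻ x : Ed d, h x * ∫⁻ η : Ed d, g (η + η - x) := by
        apply lintegral_congr; intro x
        exact lintegral_const_mul' _ _ (h_top x)
  _ ≤ ∫⁻ x : Ed d, h x * Iβ := by
        apply lintegral_mono; intro x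
        exact mul_le_mul_right (step3d x) _
  _ = (∫⁻ x : Ed d, h x) * Iβ := lintegral_mul_const' _ _ hIβ_top
  _ ≤ 2 * Iα * Iβ := by
        apply mul_le_mul_left
        have : (∫⁻ x : Ed d, h x) = Iα + ∫⁻ x : Ed d, (JE (2*α) (W - x))⁻¹ := by
          rw [hh]; dsimp only; rw [lintegral_add_left (f := fun x => (JE (2*α) x)⁻¹) (measurable_JE _).inv]
        rw [this]
        have htr : (∫⁻ x : Ed d, (JE (d := d) (2*α) (W - x))⁻¹) = Iα := by
          exact (Measure.measurePreserving_sub_left volume W).lintegral_comp (measurable_JE _).inv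
        rw [htr, two_mul]
  _ = 2 * Iα * Iβ := rfl

lemma w2_pos_real {α β : ℝ} (q : Ed d × Ed d) :
    0 < (jap (q.1 + q.2)) ^ (2 * α) * (jap (q.1 - q.2)) ^ (2 * β) := by
  have := jap_pos (q.1 + q.2); have := jap_pos (q.1 - q.2)
  positivity

lemma w2_ne_zero {α β : ℝ} (q : Ed d × Ed d) : w2 α β q ≠ 0 := by
  simp [w2, ENNReal.ofReal_eq_zero, not_le, w2_pos_real q]

lemma w2_ne_top {α β : ℝ} (q : Ed d × Ed d) : w2 α β q ≠ ⊤ := ENNReal.ofReal_ne_top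

lemma measurable_w2 {α β : ℝ} : Measurable (w2 (d := d) α β) := by
  apply ENNReal.measurable_ofReal.comp
  exact ((measurable_jap.comp (measurable_fst.add measurable_snd)).pow_const _).mul
    ((measurable_jap.comp (measurable_fst.sub measurable_snd)).pow_const _)

/-- the part-1 integrand, as a function on pairs of pairs -/
def ipd (α β : ℝ) (c p : Ed d × Ed d) : ℝ≥0∞ :=
  ENNReal.ofReal ((jap (c.1 + c.2)) ^ (2 * α) /
    ((jap (c.1 + c.2 - p.1 - p.2)) ^ (2 * α) * (jap (p.1 + p.2)) ^ (2 * α) *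
      (jap (p.1 - p.2)) ^ (2 * β)))

lemma measurable_ipd {α β : ℝ} : Measurable (Function.uncurry (ipd (d := d) α β)) := by
  apply ENNReal.measurable_ofReal.comp
  apply Measurable.div
  · exact (measurable_jap.comp ((measurable_fst.fst.add measurable_fst.snd))).pow_const _
  · exact (((measurable_jap.comp (((measurable_fst.fst.add measurable_fst.snd).sub
        measurable_snd.fst).sub measurable_snd.snd)).pow_const _).mul
      ((measurable_jap.comp (measurable_snd.fst.add measurable_snd.snd)).pow_const _)).mul
      ((measurable_jap.comp (measurable_snd.fst.sub measurable_snd.snd)).pow_const _)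

/-- the shift map -/
def sh (p : Ed d × Ed d) : Ed d × Ed d :=
  ((2:ℝ)⁻¹ • (p.1 + p.2), (2:ℝ)⁻¹ • (p.1 + p.2))

lemma measurable_sh : Measurable (sh (d := d)) :=
  ((measurable_fst.add measurable_snd).const_smul (2:ℝ)⁻¹).prodMk
    ((measurable_fst.add measurable_snd).const_smul (2:ℝ)⁻¹)

lemma sh_add (p : Ed d × Ed d) : (sh p).1 + (sh p).1 = p.1 + p.2 := by
  simp only [sh, ← add_smul]
  norm_num

/-- weight identity: `w2 c * (w2 (c - sh p) * w2 p)⁻¹` equals the part-1 integrand. -/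
lemma weight_identity (α β : ℝ) (c p : Ed d × Ed d) :
    w2 α β c * (w2 α β (c - sh p) * w2 α β p)⁻¹ = ipd α β c p := by
  have h1 : (c - sh p).1 + (c - sh p).2 = c.1 + c.2 - p.1 - p.2 := by
    have := sh_add p
    simp only [Prod.fst_sub, Prod.snd_sub, sh] at *
    rw [show c.1 - (2:ℝ)⁻¹ • (p.1 + p.2) + (c.2 - (2:ℝ)⁻¹ • (p.1 + p.2))
        = c.1 + c.2 - ((2:ℝ)⁻¹ • (p.1 + p.2) + (2:ℝ)⁻¹ • (p.1 + p.2)) by abel, this]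
    abel
  have h2 : (c - sh p).1 - (c - sh p).2 = c.1 - c.2 := by
    simp only [Prod.fst_sub, Prod.snd_sub, sh]
    abel
  have hA : (0:ℝ) < jap (c.1 + c.2) ^ (2*α) := Real.rpow_pos_of_pos (jap_pos _) _
  have hB : (0:ℝ) < jap (c.1 + c.2 - p.1 - p.2) ^ (2*α) := Real.rpow_pos_of_pos (jap_pos _) _
  have hCa : (0:ℝ) < jap (p.1 + p.2) ^ (2*α) := Real.rpow_pos_of_pos (jap_pos _) _
  have hCb : (0:ℝ) < jap (p.1 - p.2) ^ (2*β) := Real.rpow_pos_of_pos (jap_pos _) _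
  have hD : (0:ℝ) < jap (c.1 - c.2) ^ (2*β) := Real.rpow_pos_of_pos (jap_pos _) _
  rw [w2, w2, w2, ipd, h1, h2, ← ENNReal.ofReal_mul (by positivity),
    ← ENNReal.ofReal_inv_of_pos (by positivity), ← ENNReal.ofReal_mul (by positivity)]
  congr 1
  field_simp

/-- Part 2: the bilinear bound, given the uniform integral bound `K`. -/
lemma part2 {α β : ℝ} (K : ℝ≥0∞)
    (hK : ∀ c : Ed d × Ed d, (∫⁻ p : Ed d × Ed d, ipd α β c p) ≤ K)
    (bInfty : ℝ≥0∞) (G g₁ g₂ : Ed d × Ed d → ℝ≥0∞)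
    (hg₁ : Measurable g₁) (hg₂ : Measurable g₂)
    (hG : ∀ ξ ξ' : Ed d, G (ξ, ξ') ≤
      bInfty * ∫⁻ η : Ed d, ∫⁻ η' : Ed d,
        g₁ (ξ - (2:ℝ)⁻¹ • (η + η'), ξ' - (2:ℝ)⁻¹ • (η + η')) * g₂ (η, η')) :
    (∫⁻ q : Ed d × Ed d, w2 α β q * (G q) ^ 2)
      ≤ K * bInfty ^ 2 * (∫⁻ q : Ed d × Ed d, w2 α β q * (g₁ q) ^ 2)
          * ∫⁻ q : Ed d × Ed d, w2 α β q * (g₂ q) ^ 2 := by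
  classical
  set F₁ : Ed d × Ed d → ℝ≥0∞ := fun q => w2 α β q * (g₁ q) ^ 2 with hF₁
  set F₂ : Ed d × Ed d → ℝ≥0∞ := fun q => w2 α β q * (g₂ q) ^ 2 with hF₂
  have hmF₁ : Measurable F₁ := measurable_w2.mul (hg₁.pow_const 2)
  have hmF₂ : Measurable F₂ := measurable_w2.mul (hg₂.pow_const 2)
  set N₁ := ∫⁻ q : Ed d × Ed d, F₁ q with hN₁
  set N₂ := ∫⁻ q : Ed d × Ed d, F₂ q with hN₂
  -- the doubly-shifted integrand
  set Φ : Ed d × Ed d → Ed d × Ed d → ℝ≥0∞ := fun c p => F₁ (c - sh p) * F₂ p with hΦ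
  have hmΦ : Measurable (Function.uncurry Φ) :=
    (hmF₁.comp (measurable_fst.sub (measurable_sh.comp measurable_snd))).mul
      (hmF₂.comp measurable_snd)
  -- Step B1 : pointwise bound for each c
  have B1 : ∀ c : Ed d × Ed d, w2 α β c * G c ^ 2 ≤ bInfty ^ 2 * K * ∫⁻ p, Φ c p := by
    rintro ⟨ξ, ξ'⟩
    set c : Ed d × Ed d := (ξ, ξ') with hc
    have hmTc : Measurable (fun p : Ed d × Ed d => c - sh p) :=
      measurable_const.sub measurable_sh
    set P : Ed d × Ed d → ℝ≥0∞ := fun p => g₁ (c - sh p) * g₂ p with hP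
    have hmP : Measurable P := (hg₁.comp hmTc).mul hg₂
    -- iterated integral = product integral
    have hiter : (∫⁻ η : Ed d, ∫⁻ η' : Ed d,
        g₁ (ξ - (2:ℝ)⁻¹ • (η + η'), ξ' - (2:ℝ)⁻¹ • (η + η')) * g₂ (η, η'))
        = ∫⁻ p : Ed d × Ed d, P p := by
      rw [Measure.volume_eq_prod, lintegral_prod _ hmP.aemeasurable]
      rfl
    have hGc : G c ≤ bInfty * ∫⁻ p : Ed d × Ed d, P p := by
      rw [← hiter]; exact hG ξ ξ'
    -- Cauchy–Schwarz
    set WW : Ed d × Ed d → ℝ≥0∞ := fun p => w2 α β (c - sh p) * w2 α β p with hWW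
    have hmWW : Measurable WW := (measurable_w2.comp hmTc).mul measurable_w2
    have hWW0 : ∀ p, WW p ≠ 0 := fun p =>
      mul_ne_zero (w2_ne_zero _) (w2_ne_zero _)
    have hWWt : ∀ p, WW p ≠ ⊤ := fun p =>
      ENNReal.mul_ne_top (w2_ne_top _) (w2_ne_top _)
    set F : Ed d × Ed d → ℝ≥0∞ := fun p => WW p ^ (2⁻¹:ℝ) * P p with hF
    set H : Ed d × Ed d → ℝ≥0∞ := fun p => (WW p)⁻¹ ^ (2⁻¹:ℝ) with hH
    have hmF : Measurable F := (hmWW.pow_const _).mul hmP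
    have hmH : Measurable H := hmWW.inv.pow_const _
    have hFH : ∀ p, F p * H p = P p := by
      intro p
      have : F p * H p = (WW p ^ (2⁻¹:ℝ) * (WW p)⁻¹ ^ (2⁻¹:ℝ)) * P p := by ring
      rw [this, ← ENNReal.mul_rpow_of_nonneg _ _ (by norm_num : (0:ℝ) ≤ 2⁻¹),
        ENNReal.mul_inv_cancel (hWW0 p) (hWWt p), ENNReal.one_rpow, one_mul]
    have hconj : Real.HolderConjugate 2 2 := Real.HolderConjugate.two_two
    have holder := ENNReal.lintegral_mul_le_Lp_mul_Lq (volume : Measure (Ed d × Ed d)) hconj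
      hmF.aemeasurable hmH.aemeasurable
    have hPle : (∫⁻ p : Ed d × Ed d, P p)
        ≤ (∫⁻ p : Ed d × Ed d, F p ^ (2:ℝ)) ^ (1/2:ℝ) *
          (∫⁻ p : Ed d × Ed d, H p ^ (2:ℝ)) ^ (1/2:ℝ) := by
      calc (∫⁻ p : Ed d × Ed d, P p) = ∫⁻ p : Ed d × Ed d, (F * H) p := by
            apply lintegral_congr; intro p; exact (hFH p).symm
      _ ≤ _ := holder
    -- identify F^2 and H^2
    have hF2 : ∀ p, F p ^ (2:ℝ) = Φ c p := by
      intro p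
      rw [hF]
      dsimp only
      rw [ENNReal.mul_rpow_of_nonneg _ _ (by norm_num : (0:ℝ) ≤ 2), ← ENNReal.rpow_mul,
        show (2⁻¹ * 2 : ℝ) = 1 by norm_num, ENNReal.rpow_one,
        show (2:ℝ) = ((2:ℕ):ℝ) by norm_num, ENNReal.rpow_natCast]
      simp only [hΦ, hWW, hP, hF₁, hF₂, mul_pow]
      ring
    have hH2 : ∀ p, H p ^ (2:ℝ) = (WW p)⁻¹ := by
      intro p
      rw [hH]
      dsimp only
      rw [← ENNReal.rpow_mul, show (2⁻¹ * 2 : ℝ) = 1 by norm_num, ENNReal.rpow_one]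
    set X := ∫⁻ p : Ed d × Ed d, F p ^ (2:ℝ) with hX
    set Y := ∫⁻ p : Ed d × Ed d, H p ^ (2:ℝ) with hY
    have hXeq : X = ∫⁻ p, Φ c p := by
      apply lintegral_congr; intro p; exact hF2 p
    have hYle : w2 α β c * Y ≤ K := by
      have hYeq : Y = ∫⁻ p : Ed d × Ed d, (WW p)⁻¹ := by
        apply lintegral_congr; intro p; exact hH2 p
      rw [hYeq, ← lintegral_const_mul' _ _ (w2_ne_top (α := α) (β := β) c)]
      calc (∫⁻ p : Ed d × Ed d, w2 α β c * (WW p)⁻¹)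
          = ∫⁻ p : Ed d × Ed d, ipd α β c p := by
            apply lintegral_congr; intro p
            exact weight_identity α β c p
      _ ≤ K := hK c
    have hsq : ((∫⁻ p : Ed d × Ed d, F p ^ (2:ℝ)) ^ (1/2:ℝ) *
        (∫⁻ p : Ed d × Ed d, H p ^ (2:ℝ)) ^ (1/2:ℝ)) ^ 2 = X * Y := by
      rw [mul_pow, ← ENNReal.rpow_natCast (X ^ (1/2:ℝ)) 2,
        ← ENNReal.rpow_natCast (Y ^ (1/2:ℝ)) 2, ← ENNReal.rpow_mul, ← ENNReal.rpow_mul]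
      norm_num
    calc w2 α β c * G c ^ 2 ≤ w2 α β c * (bInfty * ∫⁻ p : Ed d × Ed d, P p) ^ 2 :=
          mul_le_mul_right (pow_le_pow_left' hGc 2) _
    _ ≤ w2 α β c * ((X ^ (1/2:ℝ) * Y ^ (1/2:ℝ)) * bInfty) ^ 2 := by
          apply mul_le_mul_right
          apply pow_le_pow_left'
          rw [mul_comm]
          exact mul_le_mul_left hPle _
    _ = bInfty ^ 2 * ((X ^ (1/2:ℝ) * Y ^ (1/2:ℝ)) ^ 2 * w2 α β c) := by ring
    _ = bInfty ^ 2 * (X * Y * w2 α β c) := by rw [hsq]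
    _ = bInfty ^ 2 * (X * (w2 α β c * Y)) := by ring
    _ ≤ bInfty ^ 2 * (X * K) := by
          exact mul_le_mul_right (mul_le_mul_right hYle _) _
    _ = bInfty ^ 2 * K * X := by ring
    _ = bInfty ^ 2 * K * ∫⁻ p, Φ c p := by rw [hXeq]
  -- Step B2 : integrate over c and use Fubini + translation invariance
  have hmint : Measurable fun c : Ed d × Ed d => ∫⁻ p : Ed d × Ed d, Φ c p :=
    Measurable.lintegral_prod_right hmΦ
  calc (∫⁻ q : Ed d × Ed d, w2 α β q * (G q) ^ 2)
      ≤ ∫⁻ c : Ed d × Ed d, bInfty ^ 2 * K * ∫⁻ p : Ed d × Ed d, Φ c p :=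
        lintegral_mono B1
  _ = bInfty ^ 2 * K * ∫⁻ c : Ed d × Ed d, ∫⁻ p : Ed d × Ed d, Φ c p :=
        lintegral_const_mul _ hmint
  _ = bInfty ^ 2 * K * ∫⁻ p : Ed d × Ed d, ∫⁻ c : Ed d × Ed d, Φ c p :=
        by rw [lintegral_lintegral_swap hmΦ.aemeasurable]
  _ = bInfty ^ 2 * K * ∫⁻ p : Ed d × Ed d, N₁ * F₂ p := by
        congr 1
        apply lintegral_congr; intro p
        calc (∫⁻ c : Ed d × Ed d, Φ c p)
            = (∫⁻ c : Ed d × Ed d, F₁ (c - sh p)) * F₂ p :=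
              lintegral_mul_const _ (hmF₁.comp (measurable_id.sub measurable_const))
        _ = N₁ * F₂ p := by
              rw [lintegral_sub_right_eq_self F₁ (sh p)]
  _ = bInfty ^ 2 * K * (N₁ * N₂) := by rw [lintegral_const_mul _ hmF₂]
  _ = K * bInfty ^ 2 * N₁ * N₂ := by ring


end Stmt15Aux

open Stmt15Aux in
/-- Instantaneous bilinear estimate for the loss term in `H^{α,β}`, `α, β > d/2`.
The key reduction: the quantity
`I = sup_{ξ,ξ′} ∫ ⟨ξ+ξ′⟩^{2α}/(⟨ξ+ξ′−η−η′⟩^{2α}⟨η+η′⟩^{2α}⟨η−η′⟩^{2β}) dη dη′`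
is finite, and consequently any `G` dominated (in Fourier variables, with the
collision-kernel bound `bInfty` in front) by the loss-term majorant
`bInfty ∫ g₁(ξ−(η+η′)/2, ξ′−(η+η′)/2) g₂(η,η′) dη dη′`
satisfies the squared `H^{α,β}` bound with constant `C² · bInfty²` proportional to `I`;
i.e. `‖B⁻(γ₁,γ₂)‖_{H^{α,β}} ≤ C ‖b‖_∞ ‖γ₁‖_{H^{α,β}} ‖γ₂‖_{H^{α,β}}`. -/
theorem stmt_15 (d : ℕ) (hd : 1 ≤ d) (α β : ℝ)
    (hα : (d : ℝ) / 2 < α) (hβ : (d : ℝ) / 2 < β) :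
    ∃ C : ℝ≥0∞, C ≠ ⊤ ∧
      (∀ ξ ξ' : Ed d,
        (∫⁻ η : Ed d, ∫⁻ η' : Ed d,
            ENNReal.ofReal ((jap (ξ + ξ')) ^ (2 * α) /
              ((jap (ξ + ξ' - η - η')) ^ (2 * α) * (jap (η + η')) ^ (2 * α) *
                (jap (η - η')) ^ (2 * β)))) ≤ C ^ 2)
      ∧ ∀ (bInfty : ℝ≥0∞) (G g₁ g₂ : Ed d × Ed d → ℝ≥0∞),
          Measurable g₁ → Measurable g₂ →
          (∀ ξ ξ' : Ed d, G (ξ, ξ') ≤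
            bInfty * ∫⁻ η : Ed d, ∫⁻ η' : Ed d,
              g₁ (ξ - (2:ℝ)⁻¹ • (η + η'), ξ' - (2:ℝ)⁻¹ • (η + η')) * g₂ (η, η')) →
          (∫⁻ q : Ed d × Ed d, w2 α β q * (G q) ^ 2)
            ≤ C ^ 2 * bInfty ^ 2 * (∫⁻ q : Ed d × Ed d, w2 α β q * (g₁ q) ^ 2)
                * ∫⁻ q : Ed d × Ed d, w2 α β q * (g₂ q) ^ 2 := by
  have hd0 : (0:ℝ) ≤ d := Nat.cast_nonneg d
  set K : ℝ≥0∞ := ENNReal.ofReal (2 ^ (2*α)) *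
      ((2 * ∫⁻ y : Ed d, (JE (2*α) y)⁻¹) * ∫⁻ y : Ed d, (JE (2*β) y)⁻¹) with hK
  have hKtop : K ≠ ⊤ := by
    apply ENNReal.mul_ne_top ENNReal.ofReal_ne_top
    apply ENNReal.mul_ne_top
    · exact ENNReal.mul_ne_top (by norm_num) (JE_inv_integral_lt_top (by linarith)).ne
    · exact (JE_inv_integral_lt_top (by linarith)).ne
  have hC2 : (K ^ (2⁻¹:ℝ)) ^ 2 = K := by
    rw [← ENNReal.rpow_natCast (K ^ (2⁻¹:ℝ)) 2, ← ENNReal.rpow_mul]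
    norm_num
  refine ⟨K ^ (2⁻¹:ℝ), ENNReal.rpow_ne_top_of_nonneg (by norm_num) hKtop, ?_, ?_⟩
  · intro ξ ξ'
    rw [hC2]
    exact part1 hα hβ ξ ξ'
  · intro bInfty G g₁ g₂ hg₁ hg₂ hG
    rw [hC2]
    apply part2 K ?_ bInfty G g₁ g₂ hg₁ hg₂ hG
    intro c
    have hm : Measurable (ipd (d := d) α β c) := by
      apply ENNReal.measurable_ofReal.comp
      apply Measurable.div measurable_const
      exact (((measurable_jap.comp ((measurable_const.sub measurable_fst).sub
          measurable_snd)).pow_const _).mul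
        ((measurable_jap.comp (measurable_fst.add measurable_snd)).pow_const _)).mul
        ((measurable_jap.comp (measurable_fst.sub measurable_snd)).pow_const _)
    rw [Measure.volume_eq_prod, lintegral_prod _ hm.aemeasurable]
    simp only [ipd]
    exact part1 hα hβ c.1 c.2
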